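/- arXiv:2302.05816 — 3 statements merged into one kernel-verified Lean document; each statement's English description precedes it below -/
import Mathlib

section
/- Let φ(t,x,s,y) = (1/(2ε))|t-s|² + (1/(2δ))|x-y|² - β(t+s) + λ/t + λ/s on (0,T] × ℝⁿ × (0,T] × ℝⁿ, and let V, W : (0,T] × ℝⁿ → ℝ be L-Lipschitz. If Φ(t,x,s,y) = V(t,x) - W(s,y) - φ(t,x,s,y) attains its maximum at (t₀,x₀,s₀,y₀), then (1/ε)|t₀-s₀|² + (1/δ)|x₀-y₀|² ≤ 4L²(ε+δ), and in particular |(t₀,x₀) - (s₀,y₀)| ≤ 2L(ε+δ). -/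
set_option maxHeartbeats 1000000 in
/-- Doubling-of-variables localization: if V, W are L-Lipschitz on (0,T] × ℝⁿ (w.r.t. the
Euclidean metric on (t,x)) and Φ(t,x,s,y) = V(t,x) - W(s,y) - φ(t,x,s,y) attains its
maximum at (t₀,x₀,s₀,y₀), where
φ(t,x,s,y) = |t-s|²/(2ε) + |x-y|²/(2δ) - β(t+s) + λ/t + λ/s, then
(1/ε)|t₀-s₀|² + (1/δ)|x₀-y₀|² ≤ 4L²(ε+δ) and |(t₀,x₀)-(s₀,y₀)| ≤ 2L(ε+δ). -/
theorem doubling_localization {n : ℕ} (T L ε δ β lam : ℝ)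
    (hT : 0 < T) (hL : 0 ≤ L)
    (hε : ε ∈ Set.Ioo (0 : ℝ) 1) (hδ : δ ∈ Set.Ioo (0 : ℝ) 1)
    (hβ : β ∈ Set.Ioo (0 : ℝ) 1) (hlam : lam ∈ Set.Ioo (0 : ℝ) 1)
    (V W : ℝ → EuclideanSpace ℝ (Fin n) → ℝ)
    (hV : ∀ t s : ℝ, t ∈ Set.Ioc 0 T → s ∈ Set.Ioc 0 T →
      ∀ x y : EuclideanSpace ℝ (Fin n),
        |V t x - V s y| ≤ L * Real.sqrt ((t - s) ^ 2 + ‖x - y‖ ^ 2))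
    (hW : ∀ t s : ℝ, t ∈ Set.Ioc 0 T → s ∈ Set.Ioc 0 T →
      ∀ x y : EuclideanSpace ℝ (Fin n),
        |W t x - W s y| ≤ L * Real.sqrt ((t - s) ^ 2 + ‖x - y‖ ^ 2))
    (φ : ℝ → EuclideanSpace ℝ (Fin n) → ℝ → EuclideanSpace ℝ (Fin n) → ℝ)
    (hφ : ∀ t x s y, φ t x s y =
      (1 / (2 * ε)) * |t - s| ^ 2 + (1 / (2 * δ)) * ‖x - y‖ ^ 2
        - β * (t + s) + lam / t + lam / s)
    (t₀ s₀ : ℝ) (x₀ y₀ : EuclideanSpace ℝ (Fin n))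
    (ht₀ : t₀ ∈ Set.Ioc 0 T) (hs₀ : s₀ ∈ Set.Ioc 0 T)
    (hmax : ∀ t s : ℝ, t ∈ Set.Ioc 0 T → s ∈ Set.Ioc 0 T →
      ∀ x y : EuclideanSpace ℝ (Fin n),
        V t x - W s y - φ t x s y ≤ V t₀ x₀ - W s₀ y₀ - φ t₀ x₀ s₀ y₀) :
    (1 / ε) * |t₀ - s₀| ^ 2 + (1 / δ) * ‖x₀ - y₀‖ ^ 2 ≤ 4 * L ^ 2 * (ε + δ) ∧
    Real.sqrt ((t₀ - s₀) ^ 2 + ‖x₀ - y₀‖ ^ 2) ≤ 2 * L * (ε + δ) := by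

  obtain ⟨hε0, hε1⟩ := hε
  obtain ⟨hδ0, hδ1⟩ := hδ
  set a : ℝ := (t₀ - s₀) ^ 2 with ha
  set b : ℝ := ‖x₀ - y₀‖ ^ 2 with hb
  have ha0 : 0 ≤ a := sq_nonneg _
  have hb0 : 0 ≤ b := sq_nonneg _
  set r : ℝ := Real.sqrt (a + b) with hr
  have hr0 : 0 ≤ r := Real.sqrt_nonneg _
  have hrr : r ^ 2 = a + b := Real.sq_sqrt (by positivity)
  have habs : |t₀ - s₀| ^ 2 = a := sq_abs _
  -- test point (s₀, y₀) in the first slot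
  have h1 := hmax s₀ s₀ hs₀ hs₀ y₀ y₀
  have h2 := hmax t₀ t₀ ht₀ ht₀ x₀ x₀
  rw [hφ, hφ] at h1 h2
  simp only [sub_self, abs_zero, norm_zero] at h1 h2
  have hV1 : V t₀ x₀ - V s₀ y₀ ≤ L * r := le_trans (le_abs_self _) (hV t₀ s₀ ht₀ hs₀ x₀ y₀)
  have hW1 : W t₀ x₀ - W s₀ y₀ ≤ L * r := le_trans (le_abs_self _) (hW t₀ s₀ ht₀ hs₀ x₀ y₀)
  have hQ : (1 / ε) * a + (1 / δ) * b ≤ 2 * L * r := by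
    rw [habs] at h1 h2
    have e1 : (1 / (2 * ε)) * a = (1/2) * ((1/ε) * a) := by ring
    have e2 : (1 / (2 * δ)) * b = (1/2) * ((1/δ) * b) := by ring
    rw [e1, e2] at h1 h2
    linarith
  have hSa : a ≤ ε * ((1 / ε) * a + (1 / δ) * b) := by
    rw [mul_add]
    have h3 : ε * ((1/ε) * a) = a := by field_simp
    have h4 : 0 ≤ ε * ((1/δ) * b) := mul_nonneg hε0.le (mul_nonneg (by positivity) hb0)
    linarith
  have hSb : b ≤ δ * ((1 / ε) * a + (1 / δ) * b) := by
    rw [mul_add]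
    have h3 : δ * ((1/δ) * b) = b := by field_simp
    have h4 : 0 ≤ δ * ((1/ε) * a) := mul_nonneg hδ0.le (mul_nonneg (by positivity) ha0)
    linarith
  have hrle : r ≤ 2 * L * (ε + δ) := by
    have hS2 : (ε + δ) * ((1 / ε) * a + (1 / δ) * b) ≤ (ε + δ) * (2 * L * r) :=
      mul_le_mul_of_nonneg_left hQ (by positivity)
    have key : r * r ≤ (2 * L * (ε + δ)) * r := by
      have : r ^ 2 ≤ (2 * L * (ε + δ)) * r := by nlinarith [hSa, hSb, hrr, hS2]
      nlinarith [this]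
    rcases eq_or_lt_of_le hr0 with h | h
    · rw [← h]; positivity
    · exact le_of_mul_le_mul_right key h
  refine ⟨?_, hrle⟩
  rw [habs]
  have h5 : 2 * L * r ≤ 2 * L * (2 * L * (ε + δ)) :=
    mul_le_mul_of_nonneg_left hrle (by positivity)
  nlinarith [hQ, h5]
end

section
/- Let A, B be symmetric n×n real matrices and let σ₁, σ₂ be n×m real matrices with |σ₁ - σ₂|_F ≤ L·d and |σ₁|_F, |σ₂|_F ≤ K. Suppose the block matrix inequality diag(A, -B) ≤ (1/δ)·[[Iₙ, -Iₙ],[-Iₙ, Iₙ]] + μ·I_{2n} holds in the Loewner order. Then (1/2)·Tr(A σ₁σ₁ᵀ - B σ₂σ₂ᵀ) ≤ (L²/(2δ))·d² + μ·K². -/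
open Matrix

/-- Frobenius norm of a real matrix. -/
noncomputable def frobNorm {n m : ℕ} (M : Matrix (Fin n) (Fin m) ℝ) : ℝ :=
  Real.sqrt (∑ i, ∑ j, (M i j) ^ 2)

lemma frobNorm_sq_le {n m : ℕ} (M : Matrix (Fin n) (Fin m) ℝ) {c : ℝ} (hc : 0 ≤ c)
    (h : frobNorm M ≤ c) : ∑ i, ∑ j, (M i j) ^ 2 ≤ c ^ 2 := by
  have h0 : 0 ≤ ∑ i, ∑ j, (M i j) ^ 2 :=
    Finset.sum_nonneg fun i _ => Finset.sum_nonneg fun j _ => sq_nonneg _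
  rw [frobNorm] at h
  nlinarith [Real.sq_sqrt h0, Real.sqrt_nonneg (∑ i, ∑ j, (M i j) ^ 2)]

/-- Trace estimate from the second-order doubling condition: if
diag(A, -B) ≤ (1/δ)[[I,-I],[-I,I]] + μ I in Loewner order, |σ₁ - σ₂|_F ≤ L d and
|σ₁|_F, |σ₂|_F ≤ K, then (1/2)Tr(Aσ₁σ₁ᵀ - Bσ₂σ₂ᵀ) ≤ (L²/(2δ))d² + μK². -/
theorem trace_estimate_doubling {n m : ℕ} (δ μ L K d : ℝ)
    (hδ : 0 < δ) (hμ : 0 < μ) (hL : 0 < L) (hK : 0 < K) (hd : 0 ≤ d)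
    (A B : Matrix (Fin n) (Fin n) ℝ) (hA : A.IsSymm) (hB : B.IsSymm)
    (σ₁ σ₂ : Matrix (Fin n) (Fin m) ℝ)
    (hσdiff : frobNorm (σ₁ - σ₂) ≤ L * d)
    (hσ₁ : frobNorm σ₁ ≤ K) (hσ₂ : frobNorm σ₂ ≤ K)
    (hLoewner :
      ((1 / δ) • Matrix.fromBlocks (1 : Matrix (Fin n) (Fin n) ℝ) (-1) (-1) 1
          + μ • (1 : Matrix (Fin n ⊕ Fin n) (Fin n ⊕ Fin n) ℝ)
          - Matrix.fromBlocks A 0 0 (-B)).PosSemidef) :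
    (1 / 2) * (A * σ₁ * σ₁ᵀ - B * σ₂ * σ₂ᵀ).trace
      ≤ (L ^ 2 / (2 * δ)) * d ^ 2 + μ * K ^ 2 := by
  set F : Matrix (Fin n ⊕ Fin n) (Fin n ⊕ Fin n) ℝ :=
    Matrix.fromBlocks (1 : Matrix (Fin n) (Fin n) ℝ) (-1) (-1) 1 with hF
  set D : Matrix (Fin n ⊕ Fin n) (Fin n ⊕ Fin n) ℝ :=
    Matrix.fromBlocks A 0 0 (-B) with hD
  set x : Fin m → (Fin n ⊕ Fin n → ℝ) :=
    fun j => Sum.elim (fun i => σ₁ i j) (fun i => σ₂ i j) with hx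
  have key : ∀ j, 0 ≤ (1/δ) * ((x j) ⬝ᵥ (F *ᵥ x j)) + μ * ((x j) ⬝ᵥ (x j))
      - (x j) ⬝ᵥ (D *ᵥ x j) := by
    intro j
    have h := hLoewner.dotProduct_mulVec_nonneg (x j)
    simp only [sub_mulVec, add_mulVec, smul_mulVec, one_mulVec,
      dotProduct_sub, dotProduct_add, dotProduct_smul, smul_eq_mul,
      star_trivial] at h
    linarith
  have hsum : 0 ≤ (1/δ) * (∑ j, (x j) ⬝ᵥ (F *ᵥ x j)) + μ * (∑ j, (x j) ⬝ᵥ (x j))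
      - ∑ j, (x j) ⬝ᵥ (D *ᵥ x j) := by
    have := Finset.sum_nonneg (fun j (_ : j ∈ Finset.univ) => key j)
    simpa [Finset.sum_add_distrib, Finset.sum_sub_distrib, Finset.mul_sum] using this
  have hQF : ∑ j, (x j) ⬝ᵥ (F *ᵥ x j) = ∑ i, ∑ j, ((σ₁ - σ₂) i j) ^ 2 := by
    rw [Finset.sum_comm]
    refine Finset.sum_congr rfl fun j _ => ?_
    simp only [hx, hF, dotProduct, mulVec, Fintype.sum_sum_type, Sum.elim_inl, Sum.elim_inr,
      fromBlocks_apply₁₁, fromBlocks_apply₁₂, fromBlocks_apply₂₁, fromBlocks_apply₂₂,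
      dotProduct, one_apply, Matrix.neg_apply, Matrix.sub_apply]
    simp only [ite_mul, one_mul, zero_mul, Finset.sum_ite_eq, Finset.mem_univ, if_true,
      neg_mul, Finset.sum_neg_distrib]
    rw [← Finset.sum_add_distrib]
    exact Finset.sum_congr rfl fun i _ => by ring
  have hQI : ∑ j, (x j) ⬝ᵥ (x j)
      = (∑ i, ∑ j, (σ₁ i j) ^ 2) + (∑ i, ∑ j, (σ₂ i j) ^ 2) := by
    have hj : ∀ j, (x j) ⬝ᵥ (x j) = (∑ i, σ₁ i j ^ 2) + ∑ i, σ₂ i j ^ 2 := fun j => by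
      simp [hx, dotProduct, Fintype.sum_sum_type, pow_two]
    simp only [hj, Finset.sum_add_distrib]
    congr 1 <;> rw [Finset.sum_comm]
  have hQD : ∑ j, (x j) ⬝ᵥ (D *ᵥ x j)
      = (A * σ₁ * σ₁ᵀ - B * σ₂ * σ₂ᵀ).trace := by
    have h1 : (A * σ₁ * σ₁ᵀ).trace = ∑ j, ∑ i, (∑ k, A i k * σ₁ k j) * σ₁ i j := by
      rw [Finset.sum_comm]
      simp [Matrix.trace, Matrix.mul_apply, Matrix.diag, transpose_apply]
    have h2 : (B * σ₂ * σ₂ᵀ).trace = ∑ j, ∑ i, (∑ k, B i k * σ₂ k j) * σ₂ i j := by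
      rw [Finset.sum_comm]
      simp [Matrix.trace, Matrix.mul_apply, Matrix.diag, transpose_apply]
    rw [Matrix.trace_sub, h1, h2, ← Finset.sum_sub_distrib]
    refine Finset.sum_congr rfl fun j _ => ?_
    simp only [hx, hD, dotProduct, mulVec, Fintype.sum_sum_type, Sum.elim_inl, Sum.elim_inr,
      fromBlocks_apply₁₁, fromBlocks_apply₁₂, fromBlocks_apply₂₁, fromBlocks_apply₂₂,
      dotProduct, Matrix.zero_apply, Matrix.neg_apply, zero_mul, Finset.sum_const_zero, add_zero, zero_add,
      neg_mul, Finset.sum_neg_distrib, mul_neg]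
    rw [← sub_eq_add_neg]
    congr 1 <;> exact Finset.sum_congr rfl fun i _ => by ring
  have hF2 : ∑ i, ∑ j, ((σ₁ - σ₂) i j) ^ 2 ≤ L ^ 2 * d ^ 2 := by
    have := frobNorm_sq_le (σ₁ - σ₂) (mul_nonneg hL.le hd) hσdiff
    nlinarith
  have hN1 : ∑ i, ∑ j, (σ₁ i j) ^ 2 ≤ K ^ 2 := frobNorm_sq_le σ₁ hK.le hσ₁
  have hN2 : ∑ i, ∑ j, (σ₂ i j) ^ 2 ≤ K ^ 2 := frobNorm_sq_le σ₂ hK.le hσ₂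
  rw [hQF, hQI, hQD] at hsum
  have hrpos : 0 < 1/δ := by positivity
  have hdiv : L ^ 2 / (2 * δ) = (1/δ) * L ^ 2 / 2 := by ring
  rw [hdiv]
  nlinarith [mul_le_mul_of_nonneg_left hF2 hrpos.le,
    mul_le_mul_of_nonneg_left (add_le_add hN1 hN2) hμ.le]
end

section
/- Let u ↦ g(u) := (1/4)u⁴ + (1/3)V·u³ - (1/2)u² with V > 0. Then ũ = (1/2)(-V + sqrt(V² + 4)) is a strict local minimizer of g but not a global minimizer, i.e., g(ũ) > g(u*) where u* = (1/2)(-V - sqrt(V² + 4)). -/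
/-- For V > 0, ũ = (-V + √(V²+4))/2 is a strict local minimizer of
g(u) = u⁴/4 + V u³/3 - u²/2 but not a global one: g(ũ) > g(u*) with
u* = (-V - √(V²+4))/2. -/
theorem quartic_strict_local_not_global (V : ℝ) (hV : 0 < V)
    (g : ℝ → ℝ) (hg : ∀ u, g u = u ^ 4 / 4 + V * u ^ 3 / 3 - u ^ 2 / 2) :
    (∃ ε > 0, ∀ u : ℝ, u ≠ (-V + Real.sqrt (V ^ 2 + 4)) / 2 →
      |u - (-V + Real.sqrt (V ^ 2 + 4)) / 2| < ε →
      g ((-V + Real.sqrt (V ^ 2 + 4)) / 2) < g u) ∧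
    g ((-V - Real.sqrt (V ^ 2 + 4)) / 2) < g ((-V + Real.sqrt (V ^ 2 + 4)) / 2) := by
  set s : ℝ := Real.sqrt (V ^ 2 + 4) with hsdef
  have hs : s ^ 2 = V ^ 2 + 4 := Real.sq_sqrt (by positivity)
  have hs0 : 0 ≤ s := Real.sqrt_nonneg _
  have hsV : V < s := by nlinarith
  set a : ℝ := (-V + s) / 2 with hadef
  have ha : a ^ 2 + V * a - 1 = 0 := by
    rw [hadef]; linear_combination hs / 4
  have ha0 : 0 < a := by rw [hadef]; linarith
  have haV : a * V < 1 := by nlinarith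
  constructor
  · refine ⟨6 / (12 * a + 4 * V), by positivity, fun u hu hne => ?_⟩
    have key : g u - g a = (u - a) ^ 2 *
        (3 * u ^ 2 + (4 * V + 6 * a) * u + 9 * a ^ 2 + 8 * a * V - 6) / 12 := by
      rw [hg u, hg a]; linear_combination (a * (u - a)) * ha
    rw [abs_lt] at hne
    obtain ⟨h1, h2⟩ := hne
    have hden : 0 < 12 * a + 4 * V := by linarith
    have hcancel : 6 / (12 * a + 4 * V) * (12 * a + 4 * V) = 6 :=
      div_mul_cancel₀ _ (ne_of_gt hden)
    have h1' : -(6 : ℝ) < (u - a) * (12 * a + 4 * V) := by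
      nlinarith [mul_lt_mul_of_pos_right h1 hden]
    have h2' : (u - a) * (12 * a + 4 * V) < 6 := by
      nlinarith [mul_lt_mul_of_pos_right h2 hden]
    have hQ : 0 < 3 * u ^ 2 + (4 * V + 6 * a) * u + 9 * a ^ 2 + 8 * a * V - 6 := by
      nlinarith [sq_nonneg (u - a)]
    have hune : u - a ≠ 0 := sub_ne_zero.mpr hu
    have : 0 < g u - g a := by
      rw [key]
      positivity
    linarith
  · have hb : g a - g ((-V - s) / 2) = s * V * (V ^ 2 + 4) / 12 := by
      rw [hg, hg, hadef]; linear_combination (-(V * s / 24)) * hs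
    have hpos : 0 < s * V * (V ^ 2 + 4) / 12 := by positivity
    linarith
end
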